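/- Let T be an oriented tree of order k and let D be a directed acyclic graph with chromatic number χ(D) ≥ k. Then D contains T as a subdigraph. -/

import Mathlib

/-- The underlying simple graph of a digraph: `u` and `v` are adjacent if they are distinct
and there is an arc between them in some direction. -/
def Digraph.toSG {V : Type*} (D : Digraph V) : SimpleGraph V where
  Adj u v := u ≠ v ∧ (D.Adj u v ∨ D.Adj v u)
  symm := by constructor; intro u v h; exact ⟨Ne.symm h.1, h.2.symm⟩
  loopless := by constructor; intro v h; exact h.1 rfl

/-- The chromatic number of a digraph is that of its underlying simple graph. -/
noncomputable def Digraph.chromNum {V : Type*} (D : Digraph V) : ℕ∞ :=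
  D.toSG.chromaticNumber

/-- `D` contains a copy of `H` as a subdigraph. -/
def Digraph.Contains {V W : Type*} (D : Digraph V) (H : Digraph W) : Prop :=
  ∃ f : W → V, Function.Injective f ∧ ∀ u v, H.Adj u v → D.Adj (f u) (f v)

/-- The subdigraph of `D` induced on a set `S` of vertices. -/
def Digraph.induce {V : Type*} (D : Digraph V) (S : Set V) : Digraph S :=
  ⟨fun a b => D.Adj a b⟩

/-- A digraph `T` is `c`-universal if every digraph `D` whose chromatic number is
at least `c` contains `T` as a subdigraph. -/
def IsUniversal {V : Type} (T : Digraph V) (c : ℝ) : Prop :=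
  ∀ (W : Type) (D : Digraph W), (⌈c⌉₊ : ℕ∞) ≤ D.chromNum → D.Contains T

/-- An oriented tree: an orientation of a tree (no digons/loops, underlying graph a tree). -/
def IsOrientedTree {V : Type*} (T : Digraph V) : Prop :=
  (∀ u v, T.Adj u v → ¬ T.Adj v u) ∧ T.toSG.IsTree

/-- A directed acyclic graph: a digraph with no directed cycle. -/
def Digraph.IsDAG {V : Type*} (D : Digraph V) : Prop :=
  ∀ v, ¬ Relation.TransGen D.Adj v v

section Aux

open SimpleGraph

/-- Every finite nonempty subset of a DAG contains a sink (relative to the subset). -/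
lemma dag_sink {W : Type*} {D : Digraph W} (hdag : D.IsDAG) :
    ∀ s : Finset W, s.Nonempty → ∃ v ∈ s, ∀ u ∈ s, ¬ D.Adj v u := by
  classical
  intro s
  induction s using Finset.strongInduction with
  | _ s ih =>
    intro hs
    obtain ⟨x, hx⟩ := hs
    by_cases hsink : ∀ u ∈ s, ¬ D.Adj x u
    · exact ⟨x, hx, hsink⟩
    push_neg at hsink
    obtain ⟨u, hu, hxu⟩ := hsink
    set s' := s.filter (fun y => Relation.TransGen D.Adj x y) with hs'
    have hsub : s' ⊆ s := Finset.filter_subset _ _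
    have hss : s' ⊂ s := by
      refine (Finset.ssubset_iff_of_subset hsub).2 ⟨x, hx, ?_⟩
      intro hxs'
      exact hdag x ((Finset.mem_filter.1 hxs').2)
    obtain ⟨v, hv, hvs⟩ := ih s' hss ⟨u, Finset.mem_filter.2 ⟨hu, Relation.TransGen.single hxu⟩⟩
    refine ⟨v, hsub hv, ?_⟩
    intro w hw hadj
    exact hvs w (Finset.mem_filter.2 ⟨hw, ((Finset.mem_filter.1 hv).2).tail hadj⟩) hadj

/-- Every finite subset of a DAG has a kernel: an independent set `A` such that every
vertex of `s` outside `A` has an out-neighbour in `A`. -/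
lemma dag_kernel {W : Type*} {D : Digraph W} (hdag : D.IsDAG) :
    ∀ s : Finset W, ∃ A : Finset W, A ⊆ s ∧ (∀ a ∈ A, ∀ b ∈ A, ¬ D.Adj a b) ∧
      (∀ v ∈ s, v ∉ A → ∃ a ∈ A, D.Adj v a) := by
  classical
  intro s
  induction s using Finset.strongInduction with
  | _ s ih =>
    rcases s.eq_empty_or_nonempty with rfl | hs
    · exact ⟨∅, by simp⟩
    obtain ⟨v, hv, hvsink⟩ := dag_sink hdag s hs
    set s' := (s.erase v).filter (fun u => ¬ D.Adj u v) with hs'def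
    have hsub : s' ⊆ s := (Finset.filter_subset _ _).trans (Finset.erase_subset _ _)
    have hss : s' ⊂ s := by
      refine (Finset.ssubset_iff_of_subset hsub).2 ⟨v, hv, ?_⟩
      simp [hs'def]
    obtain ⟨A, hAs, hAind, hAcov⟩ := ih s' hss
    have hAs' : A ⊆ s := hAs.trans hsub
    refine ⟨insert v A, ?_, ?_, ?_⟩
    · exact Finset.insert_subset hv hAs'
    · intro a ha b hb hadj
      rcases Finset.mem_insert.1 ha with ha' | ha' <;> rcases Finset.mem_insert.1 hb with hb' | hb'
      · subst ha'; exact hvsink b (hb' ▸ hv) hadj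
      · subst ha'; exact hvsink b (hAs' hb') hadj
      · subst hb'; exact (Finset.mem_filter.1 (hAs ha')).2 hadj
      · exact hAind a ha' b hb' hadj
    · intro u hu hnu
      by_cases huv : D.Adj u v
      · exact ⟨v, Finset.mem_insert_self _ _, huv⟩
      · have hune : u ≠ v := fun h => hnu (h ▸ Finset.mem_insert_self _ _)
        have hus' : u ∈ s' := Finset.mem_filter.2 ⟨Finset.mem_erase.2 ⟨hune, hu⟩, huv⟩
        obtain ⟨a, ha, hua⟩ := hAcov u hus' (fun h => hnu (Finset.mem_insert_of_mem h))
        exact ⟨a, Finset.mem_insert_of_mem ha, hua⟩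

lemma dag_flip {W : Type*} {D : Digraph W} (hdag : D.IsDAG) :
    (Digraph.mk (flip D.Adj)).IsDAG := by
  intro v hv
  exact hdag v (Relation.transGen_swap.1 hv)

end Aux

section TreeAux

open SimpleGraph

variable {V : Type*} {G : SimpleGraph V}

/-- In a tree, any path has length equal to the distance between its ends. -/
lemma tree_path_length (hG : G.IsTree) {r v : V} (p : G.Walk r v) (hp : p.IsPath) :
    p.length = G.dist r v := by
  classical
  have hreach : G.Reachable r v := ⟨p⟩
  obtain ⟨q, hq⟩ := hreach.exists_walk_length_eq_dist
  have hbp : q.bypass.IsPath := q.bypass_isPath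
  have hpq : p = q.bypass := by
    have := hG.IsAcyclic.path_unique ⟨p, hp⟩ ⟨q.bypass, hbp⟩
    exact congrArg Subtype.val this
  refine le_antisymm ?_ (SimpleGraph.dist_le p)
  rw [hpq]
  exact (SimpleGraph.Walk.length_bypass_le q).trans (le_of_eq hq)

/-- In a tree, adjacent vertices have different distances to any root. -/
lemma tree_adj_dist_ne (hG : G.IsTree) (r : V) {u v : V} (h : G.Adj u v) :
    G.dist r u ≠ G.dist r v := by
  classical
  intro hd
  obtain ⟨q, hq⟩ := (hG.isConnected.preconnected r u).exists_walk_length_eq_dist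
  set p := q.bypass with hpdef
  have hpath : p.IsPath := q.bypass_isPath
  have hlen : p.length = G.dist r u := tree_path_length hG p hpath
  by_cases hv : v ∈ p.support
  · have h1 : (p.takeUntil v hv).IsPath := hpath.takeUntil hv
    have hlt : (p.takeUntil v hv).length = G.dist r v := tree_path_length hG _ h1
    have hdrop : 1 ≤ (p.dropUntil v hv).length := by
      by_contra hle
      push_neg at hle
      have h0 : (p.dropUntil v hv).length = 0 := by omega
      exact h.ne' (SimpleGraph.Walk.eq_of_length_eq_zero h0)
    have hsum : (p.takeUntil v hv).length + (p.dropUntil v hv).length = p.length := by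
      rw [← SimpleGraph.Walk.length_append, SimpleGraph.Walk.take_spec]
    omega
  · have hcpath : (p.concat h).IsPath := by
      have := hpath
      rw [SimpleGraph.Walk.isPath_def] at this ⊢
      rw [SimpleGraph.Walk.support_concat]
      simp [List.concat_eq_append, List.nodup_append, this, hv]
      exact fun a ha hav => hv (hav ▸ ha)
    have hclen := tree_path_length hG _ hcpath
    rw [SimpleGraph.Walk.length_concat] at hclen
    omega

/-- In a tree, every non-root vertex has a unique neighbour closer to the root. -/
lemma tree_parent (hG : G.IsTree) (r : V) {v : V} (hv : v ≠ r) :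
    ∃! u, G.Adj u v ∧ G.dist r u < G.dist r v := by
  classical
  have hreach : G.Reachable r v := hG.isConnected.preconnected r v
  have hdpos : 0 < G.dist r v := by
    rcases Nat.eq_zero_or_pos (G.dist r v) with h0 | h
    · exact absurd (hreach.dist_eq_zero_iff.mp h0).symm hv
    · exact h
  -- existence
  obtain ⟨q, hq⟩ := hreach.exists_walk_length_eq_dist
  have hvr : v ≠ r := hv
  obtain ⟨w, hadj, q', hq'⟩ := SimpleGraph.Walk.exists_eq_cons_of_ne hvr q.reverse
  have hlq' : q'.length + 1 = G.dist r v := by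
    have : q.reverse.length = q.length := SimpleGraph.Walk.length_reverse q
    rw [hq'] at this
    simp only [SimpleGraph.Walk.length_cons] at this
    omega
  have hwdist : G.dist r w < G.dist r v := by
    have h1 : G.dist r w ≤ q'.reverse.length := SimpleGraph.dist_le _
    rw [SimpleGraph.Walk.length_reverse] at h1
    omega
  -- uniqueness (pairwise)
  have huniq : ∀ u₁ u₂, (G.Adj u₁ v ∧ G.dist r u₁ < G.dist r v) →
      (G.Adj u₂ v ∧ G.dist r u₂ < G.dist r v) → u₁ = u₂ := by
    intro u₁ u₂ ⟨h1, hd1⟩ ⟨h2, hd2⟩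
    have key : ∀ u : V, G.Adj u v → G.dist r u < G.dist r v →
        ∃ p : G.Walk r u, p.IsPath ∧ v ∉ p.support := by
      intro u hu hdu
      obtain ⟨q, hq⟩ := (hG.isConnected.preconnected r u).exists_walk_length_eq_dist
      refine ⟨q.bypass, q.bypass_isPath, ?_⟩
      intro hvs
      have h1 : G.dist r v ≤ (q.bypass.takeUntil v hvs).length := SimpleGraph.dist_le _
      have h2 : (q.bypass.takeUntil v hvs).length ≤ q.bypass.length :=
        SimpleGraph.Walk.length_takeUntil_le _ hvs
      have h3 : q.bypass.length = G.dist r u := tree_path_length hG _ q.bypass_isPath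
      omega
    obtain ⟨p₁, hp₁, hv₁⟩ := key u₁ h1 hd1
    obtain ⟨p₂, hp₂, hv₂⟩ := key u₂ h2 hd2
    have hP₁ : (p₁.concat h1).IsPath := by
      rw [SimpleGraph.Walk.isPath_def] at hp₁ ⊢
      rw [SimpleGraph.Walk.support_concat]
      simp [List.concat_eq_append, List.nodup_append, hp₁, hv₁]
      exact fun a ha hav => hv₁ (hav ▸ ha)
    have hP₂ : (p₂.concat h2).IsPath := by
      rw [SimpleGraph.Walk.isPath_def] at hp₂ ⊢
      rw [SimpleGraph.Walk.support_concat]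
      simp [List.concat_eq_append, List.nodup_append, hp₂, hv₂]
      exact fun a ha hav => hv₂ (hav ▸ ha)
    have hPeq : p₁.concat h1 = p₂.concat h2 := by
      have := hG.IsAcyclic.path_unique ⟨p₁.concat h1, hP₁⟩ ⟨p₂.concat h2, hP₂⟩
      exact congrArg Subtype.val this
    have hrev : (p₁.concat h1).reverse = (p₂.concat h2).reverse := by rw [hPeq]
    rw [SimpleGraph.Walk.reverse_concat, SimpleGraph.Walk.reverse_concat] at hrev
    have hhead : ((SimpleGraph.Walk.cons h1.symm p₁.reverse).support.tail).head? = some u₁ := by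
      rw [SimpleGraph.Walk.support_cons]
      simp only [List.tail_cons]
      rw [SimpleGraph.Walk.support_eq_cons]
      rfl
    have hhead2 : ((SimpleGraph.Walk.cons h2.symm p₂.reverse).support.tail).head? = some u₂ := by
      rw [SimpleGraph.Walk.support_cons]
      simp only [List.tail_cons]
      rw [SimpleGraph.Walk.support_eq_cons]
      rfl
    rw [hrev] at hhead
    rw [hhead2] at hhead
    exact (Option.some_injective _ hhead).symm
  exact ⟨w, ⟨hadj.symm, hwdist⟩, fun y hy => huniq y w hy ⟨hadj.symm, hwdist⟩⟩

end TreeAux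

section ColorAux

open SimpleGraph

/-- Peeling an independent set off a finite induced subdigraph costs one colour. -/
lemma peel_color {W : Type*} [DecidableEq W] {D : Digraph W} {s A : Finset W} (hAs : A ⊆ s)
    (hInd : ∀ a ∈ A, ∀ b ∈ A, ¬ D.Adj a b) {n : ℕ}
    (hc : (D.induce ↑(s \ A)).toSG.Colorable n) :
    (D.induce ↑s).toSG.Colorable (n + 1) := by
  classical
  obtain ⟨c⟩ := hc
  refine ⟨SimpleGraph.Coloring.mk (fun v => if h : v.val ∈ A then Fin.last n
    else (c ⟨v.val, by
      have hvs : v.val ∈ s := v.property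
      simp [Finset.mem_sdiff, hvs, h]⟩).castSucc) ?_⟩
  rintro a b ⟨hne, harc⟩
  have hvne : a.val ≠ b.val := fun h => hne (Subtype.ext h)
  by_cases ha : a.val ∈ A <;> by_cases hb : b.val ∈ A
  · exfalso
    rcases harc with h | h
    · exact hInd _ ha _ hb h
    · exact hInd _ hb _ ha h
  · simp only [dif_pos ha, dif_neg hb]
    exact (Fin.castSucc_lt_last _).ne'
  · simp only [dif_neg ha, dif_pos hb]
    exact (Fin.castSucc_lt_last _).ne
  · simp only [dif_neg ha, dif_neg hb]
    intro heq
    have hcc := Fin.castSucc_injective _ heq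
    have hadj : (D.induce ↑(s \ A)).toSG.Adj
        ⟨a.val, by have := a.property; simp_all [Finset.mem_sdiff]⟩
        ⟨b.val, by have := b.property; simp_all [Finset.mem_sdiff]⟩ := by
      exact ⟨fun h => hvne (by simpa using h), harc⟩
    exact c.valid hadj hcc

lemma not_colorable_nonempty {W : Type*} {D : Digraph W} {s : Finset W} {n : ℕ}
    (h : ¬ (D.induce ↑s).toSG.Colorable n) : s.Nonempty := by
  rcases s.eq_empty_or_nonempty with rfl | hs
  · exfalso
    apply h
    have : IsEmpty ((↑(∅ : Finset W)) : Set W) := by simp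
    exact ⟨SimpleGraph.Coloring.mk (fun v => isEmptyElim v) (fun {v} => isEmptyElim v)⟩
  · exact hs

end ColorAux

section EmbAux

open SimpleGraph

/-- Main embedding lemma: the first `m` vertices (in BFS order `e`) of the oriented tree `T`
embed into any finite set `s` whose induced subdigraph is not `(m-1)`-colorable. -/
lemma emb_step {V W : Type*} {T : Digraph V} (hT1 : ∀ u v, T.Adj u v → ¬ T.Adj v u)
    {k : ℕ} (e : Fin k ≃ V)
    (hpar : ∀ i : Fin k, 0 < i.val → ∃ j : Fin k, j < i ∧ T.toSG.Adj (e j) (e i) ∧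
      ∀ j' : Fin k, j' < i → T.toSG.Adj (e j') (e i) → j' = j)
    {D : Digraph W} (hdag : D.IsDAG) :
    ∀ m : ℕ, m ≤ k → ∀ s : Finset W, ¬ (D.induce ↑s).toSG.Colorable (m - 1) →
    ∃ f : Fin k → W, (∀ i : Fin k, i.val < m → f i ∈ s) ∧
      (∀ i j : Fin k, i.val < m → j.val < m → i ≠ j → f i ≠ f j) ∧
      (∀ i j : Fin k, i.val < m → j.val < m → T.Adj (e i) (e j) → D.Adj (f i) (f j)) := by
  classical
  intro m
  induction m with
  | zero =>
    intro _ s hcol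
    obtain ⟨w, _⟩ := not_colorable_nonempty hcol
    exact ⟨fun _ => w, fun i hi => absurd hi (by omega), fun i j hi => absurd hi (by omega),
      fun i j hi => absurd hi (by omega)⟩
  | succ m ih =>
    intro hmk s hcol
    match m, hcol, ih with
    | 0, hcol, _ =>
      obtain ⟨w, hw⟩ := not_colorable_nonempty hcol
      refine ⟨fun _ => w, fun i _ => hw, ?_, ?_⟩
      · intro i j hi hj hij
        exfalso; apply hij; apply Fin.ext; omega
      · intro i j hi hj hadj
        exfalso
        have : i = j := by apply Fin.ext; omega
        subst this
        exact hT1 _ _ hadj hadj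
    | n + 1, hcol, ih =>
      -- new vertex index
      have hnk : n + 1 < k := by omega
      set iM : Fin k := ⟨n + 1, hnk⟩ with hiM
      obtain ⟨j₀, hj₀lt, hj₀adj, hj₀uniq⟩ := hpar iM (by simp [hiM])
      -- direction of the tree arc between e j₀ and e iM
      rcases hj₀adj.2 with hdir | hdir
      · -- arc e j₀ → e iM : need a fresh out-neighbour; use an out-kernel
        obtain ⟨A, hAs, hAind, hAcov⟩ := dag_kernel hdag s
        have hcol' : ¬ (D.induce ↑(s \ A)).toSG.Colorable (n + 1 - 1) := by
          intro hc
          apply hcol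
          simpa using peel_color hAs hAind hc
        obtain ⟨f, hmem, hinj, harcs⟩ := ih (by omega) (s \ A) hcol'
        have hj₀m : (j₀ : Fin k).val < n + 1 := hj₀lt
        have hfj₀ : f j₀ ∈ s \ A := hmem j₀ hj₀m
        have hfs : f j₀ ∈ s := (Finset.mem_sdiff.1 hfj₀).1
        have hfA : f j₀ ∉ A := (Finset.mem_sdiff.1 hfj₀).2
        obtain ⟨a, haA, hfa⟩ := hAcov (f j₀) hfs hfA
        refine ⟨Function.update f iM a, ?_, ?_, ?_⟩
        · intro i hi
          by_cases hieq : i = iM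
          · subst hieq; rw [Function.update_self]; exact hAs haA
          · have : i.val < n + 1 := by
              rcases Nat.lt_succ_iff_lt_or_eq.1 hi with h | h
              · exact h
              · exact absurd (Fin.ext h) hieq
            rw [Function.update_of_ne hieq]
            exact (Finset.mem_sdiff.1 (hmem i this)).1
        · intro i j hi hj hij
          by_cases hieq : i = iM <;> by_cases hjeq : j = iM
          · subst hieq; subst hjeq; exact absurd rfl hij
          · subst hieq
            have hjm : j.val < n + 1 := by
              rcases Nat.lt_succ_iff_lt_or_eq.1 hj with h | h
              · exact h
              · exact absurd (Fin.ext h) hjeq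
            rw [Function.update_self, Function.update_of_ne hjeq]
            intro heq
            exact (Finset.mem_sdiff.1 (hmem j hjm)).2 (heq ▸ haA)
          · subst hjeq
            have him : i.val < n + 1 := by
              rcases Nat.lt_succ_iff_lt_or_eq.1 hi with h | h
              · exact h
              · exact absurd (Fin.ext h) hieq
            rw [Function.update_self, Function.update_of_ne hieq]
            intro heq
            exact (Finset.mem_sdiff.1 (hmem i him)).2 (heq ▸ haA)
          · have him : i.val < n + 1 := by
              rcases Nat.lt_succ_iff_lt_or_eq.1 hi with h | h
              · exact h
              · exact absurd (Fin.ext h) hieq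
            have hjm : j.val < n + 1 := by
              rcases Nat.lt_succ_iff_lt_or_eq.1 hj with h | h
              · exact h
              · exact absurd (Fin.ext h) hjeq
            rw [Function.update_of_ne hieq, Function.update_of_ne hjeq]
            exact hinj i j him hjm hij
        · intro i j hi hj hadj
          by_cases hieq : i = iM <;> by_cases hjeq : j = iM
          · subst hieq; subst hjeq; exact absurd hadj (fun h => hT1 _ _ h h)
          · -- i = iM : arc e iM → e j with j earlier; uniqueness forces j = j₀,
            -- contradicting no-digon with hdir
            subst hieq
            exfalso
            have hjm : j.val < n + 1 := by
              rcases Nat.lt_succ_iff_lt_or_eq.1 hj with h | h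
              · exact h
              · exact absurd (Fin.ext h) hjeq
            have hjlt : j < iM := hjm
            have hne : e j ≠ e iM := fun h => hjeq (e.injective h)
            have : j = j₀ := hj₀uniq j hjlt ⟨hne, Or.inr hadj⟩
            subst this
            exact hT1 _ _ hdir hadj
          · -- j = iM : arc e i → e iM , uniqueness forces i = j₀
            subst hjeq
            have him : i.val < n + 1 := by
              rcases Nat.lt_succ_iff_lt_or_eq.1 hi with h | h
              · exact h
              · exact absurd (Fin.ext h) hieq
            have hilt : i < iM := him
            have hne : e i ≠ e iM := fun h => hieq (e.injective h)
            have hieq₀ : i = j₀ := hj₀uniq i hilt ⟨hne, Or.inl hadj⟩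
            subst hieq₀
            rw [Function.update_of_ne hieq, Function.update_self]
            exact hfa
          · have him : i.val < n + 1 := by
              rcases Nat.lt_succ_iff_lt_or_eq.1 hi with h | h
              · exact h
              · exact absurd (Fin.ext h) hieq
            have hjm : j.val < n + 1 := by
              rcases Nat.lt_succ_iff_lt_or_eq.1 hj with h | h
              · exact h
              · exact absurd (Fin.ext h) hjeq
            rw [Function.update_of_ne hieq, Function.update_of_ne hjeq]
            exact harcs i j him hjm hadj
      · -- arc e iM → e j₀ : need a fresh in-neighbour; use an in-kernel (kernel of flip)
        obtain ⟨A, hAs, hAind', hAcov'⟩ := dag_kernel (dag_flip hdag) s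
        have hAind : ∀ a ∈ A, ∀ b ∈ A, ¬ D.Adj a b := fun a ha b hb => hAind' b hb a ha
        have hAcov : ∀ v ∈ s, v ∉ A → ∃ a ∈ A, D.Adj a v := hAcov'
        have hcol' : ¬ (D.induce ↑(s \ A)).toSG.Colorable (n + 1 - 1) := by
          intro hc
          apply hcol
          simpa using peel_color hAs hAind hc
        obtain ⟨f, hmem, hinj, harcs⟩ := ih (by omega) (s \ A) hcol'
        have hj₀m : (j₀ : Fin k).val < n + 1 := hj₀lt
        have hfj₀ : f j₀ ∈ s \ A := hmem j₀ hj₀m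
        have hfs : f j₀ ∈ s := (Finset.mem_sdiff.1 hfj₀).1
        have hfA : f j₀ ∉ A := (Finset.mem_sdiff.1 hfj₀).2
        obtain ⟨a, haA, hfa⟩ := hAcov (f j₀) hfs hfA
        refine ⟨Function.update f iM a, ?_, ?_, ?_⟩
        · intro i hi
          by_cases hieq : i = iM
          · subst hieq; rw [Function.update_self]; exact hAs haA
          · have : i.val < n + 1 := by
              rcases Nat.lt_succ_iff_lt_or_eq.1 hi with h | h
              · exact h
              · exact absurd (Fin.ext h) hieq
            rw [Function.update_of_ne hieq]
            exact (Finset.mem_sdiff.1 (hmem i this)).1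
        · intro i j hi hj hij
          by_cases hieq : i = iM <;> by_cases hjeq : j = iM
          · subst hieq; subst hjeq; exact absurd rfl hij
          · subst hieq
            have hjm : j.val < n + 1 := by
              rcases Nat.lt_succ_iff_lt_or_eq.1 hj with h | h
              · exact h
              · exact absurd (Fin.ext h) hjeq
            rw [Function.update_self, Function.update_of_ne hjeq]
            intro heq
            exact (Finset.mem_sdiff.1 (hmem j hjm)).2 (heq ▸ haA)
          · subst hjeq
            have him : i.val < n + 1 := by
              rcases Nat.lt_succ_iff_lt_or_eq.1 hi with h | h
              · exact h
              · exact absurd (Fin.ext h) hieq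
            rw [Function.update_self, Function.update_of_ne hieq]
            intro heq
            exact (Finset.mem_sdiff.1 (hmem i him)).2 (heq ▸ haA)
          · have him : i.val < n + 1 := by
              rcases Nat.lt_succ_iff_lt_or_eq.1 hi with h | h
              · exact h
              · exact absurd (Fin.ext h) hieq
            have hjm : j.val < n + 1 := by
              rcases Nat.lt_succ_iff_lt_or_eq.1 hj with h | h
              · exact h
              · exact absurd (Fin.ext h) hjeq
            rw [Function.update_of_ne hieq, Function.update_of_ne hjeq]
            exact hinj i j him hjm hij
        · intro i j hi hj hadj
          by_cases hieq : i = iM <;> by_cases hjeq : j = iM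
          · subst hieq; subst hjeq; exact absurd hadj (fun h => hT1 _ _ h h)
          · -- i = iM : arc e iM → e j ; uniqueness forces j = j₀, matching hdir
            subst hieq
            have hjm : j.val < n + 1 := by
              rcases Nat.lt_succ_iff_lt_or_eq.1 hj with h | h
              · exact h
              · exact absurd (Fin.ext h) hjeq
            have hjlt : j < iM := hjm
            have hne : e j ≠ e iM := fun h => hjeq (e.injective h)
            have hjeq₀ : j = j₀ := hj₀uniq j hjlt ⟨hne, Or.inr hadj⟩
            subst hjeq₀
            rw [Function.update_self, Function.update_of_ne hjeq]
            exact hfa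
          · subst hjeq
            exfalso
            have him : i.val < n + 1 := by
              rcases Nat.lt_succ_iff_lt_or_eq.1 hi with h | h
              · exact h
              · exact absurd (Fin.ext h) hieq
            have hilt : i < iM := him
            have hne : e i ≠ e iM := fun h => hieq (e.injective h)
            have hieq₀ : i = j₀ := hj₀uniq i hilt ⟨hne, Or.inl hadj⟩
            subst hieq₀
            exact hT1 _ _ hdir hadj
          · have him : i.val < n + 1 := by
              rcases Nat.lt_succ_iff_lt_or_eq.1 hi with h | h
              · exact h
              · exact absurd (Fin.ext h) hieq
            have hjm : j.val < n + 1 := by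
              rcases Nat.lt_succ_iff_lt_or_eq.1 hj with h | h
              · exact h
              · exact absurd (Fin.ext h) hjeq
            rw [Function.update_of_ne hieq, Function.update_of_ne hjeq]
            exact harcs i j him hjm hadj

end EmbAux

/-- Every oriented tree of order `k` is contained in every DAG of chromatic number
at least `k`. -/
theorem oriented_tree_in_dag (k : ℕ) {V : Type} [Fintype V] (T : Digraph V)
    (hT : IsOrientedTree T) (hcard : Fintype.card V = k)
    {W : Type} (D : Digraph W) (hdag : D.IsDAG) (hchrom : (k : ℕ∞) ≤ D.chromNum) :
    D.Contains T := by
  classical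
  obtain ⟨hT1, hT2⟩ := hT
  rcases Nat.eq_zero_or_pos k with rfl | hk
  · have : IsEmpty V := Fintype.card_eq_zero_iff.mp hcard
    exact ⟨isEmptyElim, fun a => isEmptyElim a, fun u => isEmptyElim u⟩
  -- `D.toSG` is not `(k-1)`-colourable
  have hnotcol : ¬ D.toSG.Colorable (k - 1) := by
    intro hc
    have h1 : D.toSG.chromaticNumber ≤ ((k - 1 : ℕ) : ℕ∞) := hc.chromaticNumber_le
    have h2 : ((k : ℕ) : ℕ∞) ≤ ((k - 1 : ℕ) : ℕ∞) := le_trans hchrom h1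
    have := Nat.cast_le.mp h2
    omega
  -- compactness: some finite induced subdigraph is not `(k-1)`-colourable
  have hfin : ∃ s : Finset W, ¬ (D.induce ↑s).toSG.Colorable (k - 1) := by
    by_contra hall
    push_neg at hall
    apply hnotcol
    have hhom : ∀ G' : D.toSG.Subgraph, G'.verts.Finite →
        G'.coe →g (⊤ : SimpleGraph (Fin (k - 1))) := by
      intro G' hGf
      have c := (hall hGf.toFinset).some
      refine ⟨fun v => c ⟨v.val, by simp [hGf.coe_toFinset, v.property]⟩, ?_⟩
      intro a b hab
      have hD : D.toSG.Adj a.val b.val := G'.adj_sub hab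
      exact c.valid ⟨fun h => hD.ne (by simpa using h), hD.2⟩
    exact SimpleGraph.nonempty_hom_of_forall_finite_subgraph_hom hhom
  obtain ⟨s, hscol⟩ := hfin
  -- BFS enumeration of the tree
  have : Nonempty V := Fintype.card_pos_iff.mp (hcard ▸ hk)
  obtain ⟨r⟩ := this
  set G := T.toSG with hGdef
  have e₀ : Fin k ≃ V := (Fintype.equivFinOfCardEq hcard).symm
  set σ : Equiv.Perm (Fin k) := Tuple.sort ((G.dist r) ∘ e₀) with hσdef
  set e : Fin k ≃ V := σ.trans e₀ with hedef
  have hmono : Monotone (fun i => G.dist r (e i)) := by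
    have := Tuple.monotone_sort ((G.dist r) ∘ e₀)
    exact this
  have he0 : e ⟨0, hk⟩ = r := by
    have h1 : G.dist r (e ⟨0, hk⟩) ≤ G.dist r (e (e.symm r)) := hmono (by simp [Fin.le_def])
    rw [Equiv.apply_symm_apply] at h1
    have h2 : G.dist r r = 0 := SimpleGraph.dist_self
    have h3 : G.dist r (e ⟨0, hk⟩) = 0 := by omega
    have := (hT2.isConnected.preconnected r (e ⟨0, hk⟩)).dist_eq_zero_iff.mp h3
    exact this.symm
  have hpar : ∀ i : Fin k, 0 < i.val → ∃ j : Fin k, j < i ∧ G.Adj (e j) (e i) ∧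
      ∀ j' : Fin k, j' < i → G.Adj (e j') (e i) → j' = j := by
    intro i hi
    have hir : e i ≠ r := by
      rw [← he0]
      intro h
      have h2 := congrArg Fin.val (e.injective h)
      simp only at h2
      omega
    obtain ⟨u, ⟨huadj, hudist⟩, huuniq⟩ := tree_parent hT2 r hir
    set j : Fin k := e.symm u with hjdef
    have hju : e j = u := e.apply_symm_apply u
    have hjlt : j < i := by
      by_contra hle
      push_neg at hle
      have hmm : G.dist r (e i) ≤ G.dist r (e j) := hmono hle
      rw [hju] at hmm
      omega
    refine ⟨j, hjlt, hju ▸ huadj, ?_⟩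
    intro j' hj' hadj'
    have hle : G.dist r (e j') ≤ G.dist r (e i) := hmono (le_of_lt hj')
    have hne : G.dist r (e j') ≠ G.dist r (e i) := tree_adj_dist_ne hT2 r hadj'
    have : e j' = u := huuniq (e j') ⟨hadj', by omega⟩
    rw [← hju] at this
    exact e.injective this
  obtain ⟨f, hmem, hinj, harcs⟩ := emb_step hT1 e hpar hdag k le_rfl s hscol
  refine ⟨fun v => f (e.symm v), ?_, ?_⟩
  · intro a b hab
    by_contra hne
    exact hinj (e.symm a) (e.symm b) (e.symm a).isLt (e.symm b).isLt
      (fun h => hne (by simpa using congrArg e h)) hab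
  · intro u v huv
    have := harcs (e.symm u) (e.symm v) (e.symm u).isLt (e.symm v).isLt
    simp only [Equiv.apply_symm_apply] at this
    exact this huv
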